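/- For the sequence generated by I-FISTA, the objective gap satisfies F(x_k) - F* ≤ 2L d_0² / (τ(k+1)²) for all k ≥ 1, where d_0 is the distance from x_0 to the solution set. -/

import Mathlib

noncomputable section

/-- The ε-subdifferential of an extended-real-valued function `g` at `x`:
`∂_ε g(x) = {u | ∀ z, g z ≥ g x + ⟨u, z - x⟩ - ε}`. -/
def epsSubdiff {E : Type*} [NormedAddCommGroup E] [InnerProductSpace ℝ E]
    (g : E → EReal) (ε : ℝ) (x : E) : Set E :=
  {u | ∀ z : E, g x + (((inner ℝ u (z - x) : ℝ) - ε : ℝ) : EReal) ≤ g z}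

/-- `g` is proper: it takes a value `< ⊤` somewhere and is never `⊥`. -/
def ProperFn {E : Type*} (g : E → EReal) : Prop :=
  (∃ x, g x ≠ ⊤) ∧ ∀ x, g x ≠ ⊥

/-- Convexity for an extended-real-valued function. -/
def ConvexFn {E : Type*} [NormedAddCommGroup E] [Module ℝ E] (g : E → EReal) : Prop :=
  ∀ x y : E, ∀ a b : ℝ, 0 ≤ a → 0 ≤ b → a + b = 1 →
    g (a • x + b • y) ≤ (a : EReal) * g x + (b : EReal) * g y

section aux
open InnerProductSpace
variable {E : Type*} [NormedAddCommGroup E] [InnerProductSpace ℝ E] [CompleteSpace E]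
lemma comp_line {f : E → ℝ} {φ : E} (p d : E) (s : ℝ) (h : HasGradientAt f φ (p + s • d)) :
    HasDerivAt (fun r : ℝ => f (p + r • d)) (inner ℝ φ d : ℝ) s := by
  have hc : HasDerivAt (fun r : ℝ => p + r • d) d s := by
    simpa using ((hasDerivAt_id s).smul_const d).const_add p
  have := (hasGradientAt_iff_hasFDerivAt.1 h).comp_hasDerivAt s hc
  simp [InnerProductSpace.toDual_apply_apply] at this; exact this

lemma descent_lemma {f : E → ℝ} {f' : E → E} {L : ℝ} (hL : 0 < L)
    (hgrad : ∀ x : E, HasGradientAt f (f' x) x)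
    (hlip : ∀ x y : E, ‖f' x - f' y‖ ≤ L * ‖x - y‖) (x y : E) :
    f x ≤ f y + inner ℝ (f' y) (x - y) + L / 2 * ‖x - y‖ ^ 2 := by
  set d := x - y with hd
  set χ : ℝ → ℝ := fun s => f (y + s • d) - s * inner ℝ (f' y) d - L / 2 * s ^ 2 * ‖d‖ ^ 2 with hχ
  have hder : ∀ s : ℝ, HasDerivAt χ
      ((inner ℝ (f' (y + s • d)) d : ℝ) - inner ℝ (f' y) d - L * s * ‖d‖ ^ 2) s := by
    intro s
    have h1 : HasDerivAt (fun r : ℝ => f (y + r • d)) (inner ℝ (f' (y + s • d)) d : ℝ) s :=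
      comp_line y d s (hgrad _)
    have h2 : HasDerivAt (fun r : ℝ => r * (inner ℝ (f' y) d : ℝ)) (inner ℝ (f' y) d : ℝ) s := by
      simpa using (hasDerivAt_id s).mul_const (inner ℝ (f' y) d : ℝ)
    have h3 : HasDerivAt (fun r : ℝ => L / 2 * r ^ 2 * ‖d‖ ^ 2) (L * s * ‖d‖ ^ 2) s := by
      have := ((hasDerivAt_pow 2 s).const_mul (L / 2)).mul_const (‖d‖ ^ 2)
      rw [show L * s * ‖d‖ ^ 2 = L / 2 * (((2:ℕ):ℝ) * s ^ (2 - 1)) * ‖d‖ ^ 2 by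
        rw [show (2:ℕ) - 1 = 1 from rfl]; push_cast; ring]
      exact this
    have := (h1.sub (by simpa [mul_comm] using h2)).sub h3
    exact this
  have hcont : ContinuousOn χ (Set.Icc (0:ℝ) 1) := by
    exact fun s _ => ((hder s).continuousAt).continuousWithinAt
  have hmono : AntitoneOn χ (Set.Icc (0:ℝ) 1) := by
    apply antitoneOn_of_deriv_nonpos (convex_Icc 0 1)
    · exact fun s _ => ((hder s).continuousAt).continuousWithinAt
    · exact fun s _ => ((hder s).differentiableAt).differentiableWithinAt
    · intro s hs
      rw [interior_Icc] at hs
      rw [(hder s).deriv]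
      have hb : (inner ℝ (f' (y + s • d) - f' y) d : ℝ) ≤ L * s * ‖d‖ ^ 2 := by
        calc (inner ℝ (f' (y + s • d) - f' y) d : ℝ) ≤ ‖f' (y + s • d) - f' y‖ * ‖d‖ :=
              real_inner_le_norm _ _
          _ ≤ (L * ‖(y + s • d) - y‖) * ‖d‖ := by
              gcongr; exact hlip _ _
          _ = L * (|s| * ‖d‖) * ‖d‖ := by simp [norm_smul]
          _ = L * s * ‖d‖ ^ 2 := by
              rw [abs_of_pos hs.1]; ring
      have := inner_sub_left (𝕜 := ℝ) (f' (y + s • d)) (f' y) d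
      linarith [hb, this.symm.le, this.le]
  have h01 := hmono (Set.mem_Icc.2 ⟨le_refl 0, zero_le_one⟩) (Set.mem_Icc.2 ⟨zero_le_one, le_refl 1⟩) zero_le_one
  simp only [hχ, zero_smul, add_zero, one_smul, zero_mul, pow_two, mul_zero, mul_one, one_mul] at h01
  have : y + d = x := by rw [hd]; abel
  rw [this] at h01
  nlinarith [h01]

lemma convex_grad_ineq {f : E → ℝ} {f' : E → E} (hfconv : ConvexOn ℝ Set.univ f)
    (hgrad : ∀ x : E, HasGradientAt f (f' x) x) (y z : E) :
    f y + inner ℝ (f' y) (z - y) ≤ f z := by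
  set d := z - y with hd
  have hder : HasDerivAt (fun r : ℝ => f (y + r • d)) (inner ℝ (f' y) d : ℝ) 0 := by
    have := comp_line y d 0 (by simpa using hgrad y)
    simpa using this
  have hslope : Filter.Tendsto (slope (fun r : ℝ => f (y + r • d)) 0) (nhdsWithin 0 {(0:ℝ)}ᶜ)
      (nhds (inner ℝ (f' y) d : ℝ)) := hasDerivAt_iff_tendsto_slope.1 hder
  have hle : ∀ s ∈ Set.Ioc (0:ℝ) 1, slope (fun r : ℝ => f (y + r • d)) 0 s ≤ f z - f y := by
    intro s hs
    have hcvx := hfconv.2 (Set.mem_univ y) (Set.mem_univ z)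
      (show (0:ℝ) ≤ 1 - s by linarith [hs.1, hs.2]) (show (0:ℝ) ≤ s from le_of_lt hs.1)
      (show (1 - s) + s = 1 by ring)
    have hyz : (1 - s) • y + s • z = y + s • d := by
      rw [hd]; module
    rw [hyz] at hcvx
    rw [slope_def_field]
    simp only [sub_zero, zero_smul, add_zero]
    rw [div_le_iff₀ hs.1]
    simp only [smul_eq_mul] at hcvx
    nlinarith [hcvx]
  have hT : Filter.Tendsto (slope (fun r : ℝ => f (y + r • d)) 0) (nhdsWithin 0 (Set.Ioi (0:ℝ)))
      (nhds (inner ℝ (f' y) d : ℝ)) :=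
    hslope.mono_left (nhdsWithin_mono 0 (fun s hs => by simpa using ne_of_gt hs))
  have : (inner ℝ (f' y) d : ℝ) ≤ f z - f y := by
    apply le_of_tendsto hT
    filter_upwards [Ioc_mem_nhdsGT_of_mem (Set.left_mem_Ico.2 zero_lt_one)] with s hs
    exact hle s hs
  linarith

lemma ereal_real_le {a b : EReal} {c : ℝ} (ha : a ≠ ⊤) (ha' : a ≠ ⊥) (hb : b ≠ ⊤) (hb' : b ≠ ⊥)
    (h : a + (c : EReal) ≤ b) : a.toReal + c ≤ b.toReal := by
  rw [← EReal.coe_toReal ha ha', ← EReal.coe_toReal hb hb', ← EReal.coe_add,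
    EReal.coe_le_coe_iff] at h
  exact h

lemma Qid (s : ℝ) (c a b : E) :
    s * (s - 1) * ‖c - a‖ ^ 2 + s * ‖c - b‖ ^ 2 =
      ‖s • c - (s - 1) • a - b‖ ^ 2 +
        (s * (s - 1) * ‖a‖ ^ 2 + s * ‖b‖ ^ 2 - ‖(s - 1) • a + b‖ ^ 2) := by
  simp only [← real_inner_self_eq_norm_sq, inner_sub_left, inner_sub_right, inner_add_left,
    inner_add_right, real_inner_smul_left, real_inner_smul_right, real_inner_comm a c,
    real_inner_comm b c, real_inner_comm b a]
  ring

lemma step_combine (s q LT δ1 δ2 : ℝ) (hs : 1 ≤ s) (hq : s ^ 2 - s = q ^ 2) (hLT : 0 ≤ LT)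
    (c c' a b : E)
    (k1 : δ2 - δ1 ≤ LT * (‖c - a‖ ^ 2 - ‖c' - a‖ ^ 2))
    (k2 : δ2 ≤ LT * (‖c - b‖ ^ 2 - ‖c' - b‖ ^ 2)) :
    s ^ 2 * δ2 + LT * ‖s • c' - (s - 1) • a - b‖ ^ 2 ≤
      q ^ 2 * δ1 + LT * ‖s • c - (s - 1) • a - b‖ ^ 2 := by
  have h1 := mul_le_mul_of_nonneg_left k1 (show (0:ℝ) ≤ s ^ 2 - s by nlinarith)
  have h2 := mul_le_mul_of_nonneg_left k2 (show (0:ℝ) ≤ s by linarith)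
  have Q1 : LT * (s * (s - 1) * ‖c - a‖ ^ 2 + s * ‖c - b‖ ^ 2) =
      LT * (‖s • c - (s - 1) • a - b‖ ^ 2 +
        (s * (s - 1) * ‖a‖ ^ 2 + s * ‖b‖ ^ 2 - ‖(s - 1) • a + b‖ ^ 2)) := by rw [Qid]
  have Q2 : LT * (s * (s - 1) * ‖c' - a‖ ^ 2 + s * ‖c' - b‖ ^ 2) =
      LT * (‖s • c' - (s - 1) • a - b‖ ^ 2 +
        (s * (s - 1) * ‖a‖ ^ 2 + s * ‖b‖ ^ 2 - ‖(s - 1) • a + b‖ ^ 2)) := by rw [Qid]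
  have hq' : (s ^ 2 - s) * δ1 = q ^ 2 * δ1 := by rw [hq]
  nlinarith [h1, h2, Q1, Q2, hq']

lemma key_ineq {L τ α : ℝ} (hL : 0 < L) (hτ0 : 0 < τ) (hα : 0 ≤ α)
    {f : E → ℝ} {f' : E → E} (hfconv : ConvexOn ℝ Set.univ f)
    (hgrad : ∀ x : E, HasGradientAt f (f' x) x)
    (hlip : ∀ x y : E, ‖f' x - f' y‖ ≤ L * ‖x - y‖)
    {g : E → EReal} (hgbot : ∀ z, g z ≠ ⊥)
    (xk yk vk : E) (εk : ℝ)
    (hinc : vk - (L / τ) • (xk - yk) - f' yk ∈ epsSubdiff g εk xk)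
    (herr2 : ‖τ • vk‖ ^ 2 + 2 * τ * εk * L ≤ L * ((1 - τ) * L - α * τ) * ‖xk - yk‖ ^ 2)
    (hfink : g xk ≠ ⊤) (z : E) (hz : g z ≠ ⊤) :
    (f xk + (g xk).toReal) - (f z + (g z).toReal) ≤
      L / (2 * τ) * (‖yk - z‖ ^ 2 - ‖xk - (τ / L) • vk - z‖ ^ 2) := by
  have hτne : τ ≠ 0 := ne_of_gt hτ0
  have hLne : L ≠ 0 := ne_of_gt hL
  rw [epsSubdiff, Set.mem_setOf_eq] at hinc
  have hA : (g xk).toReal +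
      ((inner ℝ (vk - (L / τ) • (xk - yk) - f' yk) (z - xk) : ℝ) - εk) ≤ (g z).toReal :=
    ereal_real_le hfink (hgbot _) hz (hgbot _) (hinc z)
  have hB := convex_grad_ineq hfconv hgrad yk z
  have hC := descent_lemma hL hgrad hlip xk yk
  -- error bound
  have hτv : ‖τ • vk‖ ^ 2 = τ ^ 2 * ‖vk‖ ^ 2 := by
    rw [norm_smul, Real.norm_eq_abs, mul_pow, sq_abs]
  have h1' : 2 * τ * L * εk ≤
      L * L * ‖xk - yk‖ ^ 2 - L * L * τ * ‖xk - yk‖ ^ 2 - τ ^ 2 * ‖vk‖ ^ 2 := by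
    rw [hτv] at herr2
    nlinarith [mul_nonneg (mul_nonneg (mul_nonneg hL.le hα) hτ0.le) (sq_nonneg ‖xk - yk‖)]
  have hE : εk ≤ L / (2 * τ) * ‖xk - yk‖ ^ 2 - L / 2 * ‖xk - yk‖ ^ 2
      - τ / (2 * L) * ‖vk‖ ^ 2 := by
    have h2' : εk ≤ (L * L * ‖xk - yk‖ ^ 2 - L * L * τ * ‖xk - yk‖ ^ 2
        - τ ^ 2 * ‖vk‖ ^ 2) / (2 * τ * L) := by
      rw [le_div_iff₀ (by positivity)]
      nlinarith [h1']
    have heq : (L * L * ‖xk - yk‖ ^ 2 - L * L * τ * ‖xk - yk‖ ^ 2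
        - τ ^ 2 * ‖vk‖ ^ 2) / (2 * τ * L)
        = L / (2 * τ) * ‖xk - yk‖ ^ 2 - L / 2 * ‖xk - yk‖ ^ 2
          - τ / (2 * L) * ‖vk‖ ^ 2 := by
      field_simp
    linarith [h2', heq.le, heq.ge]
  -- geometry
  have h1 : ‖yk - z‖ ^ 2 = ‖xk - z‖ ^ 2 - 2 * (inner ℝ (xk - z) (xk - yk) : ℝ)
      + ‖xk - yk‖ ^ 2 := by
    rw [show yk - z = (xk - z) - (xk - yk) by abel, norm_sub_sq_real]
  have h2 : ‖xk - (τ / L) • vk - z‖ ^ 2 = ‖xk - z‖ ^ 2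
      - 2 * ((τ / L) * (inner ℝ (xk - z) vk : ℝ)) + (τ / L) ^ 2 * ‖vk‖ ^ 2 := by
    rw [show xk - (τ / L) • vk - z = (xk - z) - (τ / L) • vk by abel, norm_sub_sq_real,
      real_inner_smul_right, norm_smul, Real.norm_eq_abs, mul_pow, sq_abs]
  have hR : L / (2 * τ) * (‖yk - z‖ ^ 2 - ‖xk - (τ / L) • vk - z‖ ^ 2)
      = L / (2 * τ) * ‖xk - yk‖ ^ 2 - τ / (2 * L) * ‖vk‖ ^ 2
        - L / τ * (inner ℝ (xk - z) (xk - yk) : ℝ) + (inner ℝ (xk - z) vk : ℝ) := by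
    rw [h1, h2]
    field_simp
    ring
  have h3 : (inner ℝ (vk - (L / τ) • (xk - yk) - f' yk) (z - xk) : ℝ)
      = -(inner ℝ (xk - z) vk : ℝ) + (L / τ) * (inner ℝ (xk - z) (xk - yk) : ℝ)
        + (inner ℝ (f' yk) (xk - z) : ℝ) := by
    simp only [inner_sub_left, inner_sub_right, real_inner_smul_left, real_inner_smul_right,
      real_inner_comm vk xk, real_inner_comm vk z, real_inner_comm xk z,
      real_inner_comm yk z, real_inner_comm yk xk]
    ring
  have h4 : (inner ℝ (f' yk) (xk - yk) : ℝ) - (inner ℝ (f' yk) (z - yk) : ℝ)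
      = (inner ℝ (f' yk) (xk - z) : ℝ) := by
    rw [← inner_sub_right, show xk - yk - (z - yk) = xk - z by abel]
  rw [hR]
  linarith [hA, hB, hC, hE, h3.le, h3.ge, h4.le, h4.ge]

end aux

lemma t_ge_one (t : ℕ → ℝ) (ht1 : t 1 = 1)
    (htrec : ∀ k : ℕ, 1 ≤ k → t (k + 1) = (1 + Real.sqrt (1 + 4 * t k ^ 2)) / 2) :
    ∀ k : ℕ, 1 ≤ k → 1 ≤ t k := by
  intro k hk
  induction k with
  | zero => omega
  | succ n ih =>
    rcases Nat.lt_or_ge n 1 with h | h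
    · have : n = 0 := by omega
      subst this; rw [ht1]
    · rw [htrec n h]
      have h4 : (1:ℝ) ≤ Real.sqrt (1 + 4 * t n ^ 2) :=
        Real.one_le_sqrt.2 (by nlinarith [ih h])
      linarith

lemma t_sq (t : ℕ → ℝ)
    (htrec : ∀ k : ℕ, 1 ≤ k → t (k + 1) = (1 + Real.sqrt (1 + 4 * t k ^ 2)) / 2)
    (k : ℕ) (hk : 1 ≤ k) : t (k + 1) ^ 2 - t (k + 1) = t k ^ 2 := by
  rw [htrec k hk]
  have h0 : (0:ℝ) ≤ 1 + 4 * t k ^ 2 := by positivity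
  linear_combination (1/4) * Real.sq_sqrt h0

lemma t_lb (t : ℕ → ℝ) (ht1 : t 1 = 1)
    (htrec : ∀ k : ℕ, 1 ≤ k → t (k + 1) = (1 + Real.sqrt (1 + 4 * t k ^ 2)) / 2) :
    ∀ k : ℕ, 1 ≤ k → ((k : ℝ) + 1) / 2 ≤ t k := by
  intro k hk
  induction k with
  | zero => omega
  | succ n ih =>
    rcases Nat.lt_or_ge n 1 with h | h
    · have : n = 0 := by omega
      subst this; rw [ht1]; norm_num
    · rw [htrec n h]
      have h1 : 1 ≤ t n := t_ge_one t ht1 htrec n h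
      have h2 : 2 * t n ≤ Real.sqrt (1 + 4 * t n ^ 2) := by
        rw [show 2 * t n = Real.sqrt ((2 * t n)^2) by rw [Real.sqrt_sq (by linarith)]]
        exact Real.sqrt_le_sqrt (by nlinarith)
      have := ih h
      push_cast
      push_cast at this
      linarith

/-- Optimal convergence rate of I-FISTA:
`F(x k) - F* ≤ 2 L d₀² / (τ (k+1)²)` for all `k ≥ 1`,
where `d₀` is the distance from `x 0` to the solution set. -/
theorem IFISTA_rate {E : Type*} [NormedAddCommGroup E] [InnerProductSpace ℝ E]
    [FiniteDimensional ℝ E]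
    (L τ α : ℝ) (hL : 0 < L) (hτ : 0 < τ ∧ τ ≤ 1) (hα : 0 ≤ α ∧ α ≤ L * (1 - τ) / τ)
    (f : E → ℝ) (f' : E → E) (hfconv : ConvexOn ℝ Set.univ f)
    (hgrad : ∀ x : E, HasGradientAt f (f' x) x)
    (hlip : ∀ x y : E, ‖f' x - f' y‖ ≤ L * ‖x - y‖)
    (g : E → EReal) (hgp : ProperFn g) (hglsc : LowerSemicontinuous g) (hgconv : ConvexFn g)
    (x y v : ℕ → E) (ε t : ℕ → ℝ)
    (ht1 : t 1 = 1) (hy1 : y 1 = x 0)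
    (htrec : ∀ k : ℕ, 1 ≤ k → t (k + 1) = (1 + Real.sqrt (1 + 4 * t k ^ 2)) / 2)
    (hεk : ∀ k : ℕ, 1 ≤ k → 0 ≤ ε k)
    (hincl : ∀ k : ℕ, 1 ≤ k →
        v k - (L / τ) • (x k - y k) - f' (y k) ∈ epsSubdiff g (ε k) (x k))
    (herr : ∀ k : ℕ, 1 ≤ k →
        ‖τ • v k‖ ^ 2 + 2 * τ * ε k * L ≤ L * ((1 - τ) * L - α * τ) * ‖x k - y k‖ ^ 2)
    (hyrec : ∀ k : ℕ, 1 ≤ k →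
        y (k + 1) = x k - ((t k / t (k + 1)) * (τ / L)) • v k
          + ((t k - 1) / t (k + 1)) • (x k - x (k - 1)))
    (Sstar : Set E) (Fstar : ℝ)
    (hS : Sstar = {z : E | ∀ w : E, (f z : EReal) + g z ≤ (f w : EReal) + g w})
    (hSne : Sstar.Nonempty)
    (hFs : ∀ z ∈ Sstar, (f z : EReal) + g z = (Fstar : EReal))
    (hfin : ∀ k : ℕ, 1 ≤ k → g (x k) ≠ ⊤) :
    ∀ k : ℕ, 1 ≤ k →
      ((f (x k) : EReal) + g (x k)).toReal - Fstar
        ≤ 2 * L / (τ * ((k : ℝ) + 1) ^ 2) * (Metric.infDist (x 0) Sstar) ^ 2 := by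
  obtain ⟨hτ0, hτ1⟩ := hτ
  have hτne : τ ≠ 0 := ne_of_gt hτ0
  have hLne : L ≠ 0 := ne_of_gt hL
  have hgbot := hgp.2
  set LT : ℝ := L / (2 * τ) with hLT
  have hLTpos : 0 < LT := by rw [hLT]; positivity
  clear_value LT
  have key : ∀ k : ℕ, 1 ≤ k → ∀ z : E, g z ≠ ⊤ →
      (f (x k) + (g (x k)).toReal) - (f z + (g z).toReal) ≤
        LT * (‖y k - z‖ ^ 2 - ‖x k - (τ / L) • v k - z‖ ^ 2) := by
    intro k hk z hz
    rw [hLT]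
    exact key_ineq hL hτ0 hα.1 hfconv hgrad hlip hgbot _ _ _ _
      (hincl k hk) (herr k hk) (hfin k hk) z hz
  -- facts about minimizers
  have hxs_facts : ∀ xs ∈ Sstar, g xs ≠ ⊤ ∧ f xs + (g xs).toReal = Fstar := by
    intro xs hxs
    have hFxs := hFs xs hxs
    have htop : g xs ≠ ⊤ := by
      intro h
      rw [h] at hFxs
      rw [EReal.add_top_of_ne_bot (EReal.coe_ne_bot _)] at hFxs
      exact (EReal.coe_ne_top Fstar) hFxs.symm
    refine ⟨htop, ?_⟩
    rw [← EReal.coe_toReal htop (hgbot xs), ← EReal.coe_add, EReal.coe_eq_coe_iff] at hFxs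
    exact hFxs
  -- nonnegativity of the gap
  have hδ0 : ∀ k : ℕ, 1 ≤ k → 0 ≤ (f (x k) + (g (x k)).toReal) - Fstar := by
    obtain ⟨xs, hxs⟩ := hSne
    intro k hk
    have hmin : (f xs : EReal) + g xs ≤ (f (x k) : EReal) + g (x k) := by
      rw [hS] at hxs
      exact hxs (x k)
    rw [hFs xs hxs, ← EReal.coe_toReal (hfin k hk) (hgbot (x k)), ← EReal.coe_add,
      EReal.coe_le_coe_iff] at hmin
    linarith
  -- main bound for a fixed minimizer
  have hmain : ∀ xs ∈ Sstar, ∀ k : ℕ, 1 ≤ k →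
      (f (x k) + (g (x k)).toReal) - Fstar ≤
        2 * L / (τ * ((k : ℝ) + 1) ^ 2) * ‖x 0 - xs‖ ^ 2 := by
    intro xs hxs
    obtain ⟨hgxs_top, hFxs_real⟩ := hxs_facts xs hxs
    set p : ℕ → E := fun k => x k - (τ / L) • v k with hp
    set u : ℕ → E := fun k => t k • p k - (t k - 1) • x (k - 1) - xs with hu
    set δ : ℕ → ℝ := fun k => (f (x k) + (g (x k)).toReal) - Fstar with hδ
    clear_value p u δ
    have hstep : ∀ k : ℕ, 1 ≤ k →
        t (k + 1) ^ 2 * δ (k + 1) + LT * ‖u (k + 1)‖ ^ 2 ≤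
          t k ^ 2 * δ k + LT * ‖u k‖ ^ 2 := by
      intro k hk
      have hk1 : 1 ≤ k + 1 := by omega
      have hs1 : 1 ≤ t (k + 1) := t_ge_one t ht1 htrec (k + 1) hk1
      have hsne : t (k + 1) ≠ 0 := by linarith
      have e1 : t (k + 1) • (((t k / t (k + 1)) * (τ / L)) • v k)
          = (t k * (τ / L)) • v k := by
        rw [smul_smul]; congr 1; field_simp
      have e2 : t (k + 1) • (((t k - 1) / t (k + 1)) • (x k - x (k - 1)))
          = (t k - 1) • (x k - x (k - 1)) := by
        rw [smul_smul]; congr 1; field_simp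
      have hvec : t (k + 1) • y (k + 1) - (t (k + 1) - 1) • x k - xs = u k := by
        rw [hyrec k hk, smul_add, smul_sub, e1, e2]
        simp only [hu, hp]
        module
      have hvec2 : t (k + 1) • p (k + 1) - (t (k + 1) - 1) • x k - xs = u (k + 1) := by
        simp only [hu, hp, Nat.add_sub_cancel]
      have k1 : δ (k + 1) - δ k ≤
          LT * (‖y (k + 1) - x k‖ ^ 2 - ‖p (k + 1) - x k‖ ^ 2) := by
        have h := key (k + 1) hk1 (x k) (hfin k hk)
        simp only [hδ, hp]
        linarith [h]
      have k2 : δ (k + 1) ≤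
          LT * (‖y (k + 1) - xs‖ ^ 2 - ‖p (k + 1) - xs‖ ^ 2) := by
        have h := key (k + 1) hk1 xs hgxs_top
        simp only [hδ, hp]
        linarith [h, hFxs_real]
      have := step_combine (t (k + 1)) (t k) LT (δ k) (δ (k + 1)) hs1
        (t_sq t htrec k hk) hLTpos.le (y (k + 1)) (p (k + 1)) (x k) xs k1 k2
      rw [hvec, hvec2] at this
      exact this
    have hbase : t 1 ^ 2 * δ 1 + LT * ‖u 1‖ ^ 2 ≤ LT * ‖x 0 - xs‖ ^ 2 := by
      have h := key 1 le_rfl xs hgxs_top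
      rw [hy1] at h
      have hu1 : u 1 = p 1 - xs := by
        simp [hu, ht1]
      rw [ht1, hu1]
      simp only [hδ, hp]
      nlinarith [h, hFxs_real]
    have hdec : ∀ k : ℕ, 1 ≤ k → t k ^ 2 * δ k + LT * ‖u k‖ ^ 2 ≤ LT * ‖x 0 - xs‖ ^ 2 := by
      intro k hk
      induction k with
      | zero => omega
      | succ n ih =>
        rcases Nat.lt_or_ge n 1 with h | h
        · have : n = 0 := by omega
          subst this
          exact hbase
        · exact le_trans (hstep n h) (ih h)
    intro k hk
    have hd := hdec k hk
    have htlb := t_lb t ht1 htrec k hk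
    have hδk := hδ0 k hk
    have hδk' : 0 ≤ δ k := by simp only [hδ]; exact hδk
    have hknn : (0:ℝ) ≤ ((k : ℝ) + 1) / 2 := by positivity
    have htk2 : (((k : ℝ) + 1) / 2) ^ 2 ≤ t k ^ 2 := by nlinarith
    have h1 : (((k : ℝ) + 1) / 2) ^ 2 * δ k ≤ LT * ‖x 0 - xs‖ ^ 2 := by
      have m1 := mul_le_mul_of_nonneg_right htk2 hδk'
      have m2 : 0 ≤ LT * ‖u k‖ ^ 2 := by positivity
      linarith [hd, m1, m2]
    have hfin2 : 4 * τ * (LT * ‖x 0 - xs‖ ^ 2) = 2 * L * ‖x 0 - xs‖ ^ 2 := by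
      rw [hLT]; field_simp; ring
    have hshow : f (x k) + (g (x k)).toReal - Fstar = δ k := by rw [hδ]
    rw [hshow]
    rw [show 2 * L / (τ * ((k : ℝ) + 1) ^ 2) * ‖x 0 - xs‖ ^ 2
        = (2 * L * ‖x 0 - xs‖ ^ 2) / (τ * ((k : ℝ) + 1) ^ 2) by ring,
      le_div_iff₀ (by positivity)]
    have m3 := mul_le_mul_of_nonneg_left h1 (show (0:ℝ) ≤ 4 * τ by positivity)
    have m4 : 4 * τ * ((((k : ℝ) + 1) / 2) ^ 2 * δ k) = δ k * (τ * ((k : ℝ) + 1) ^ 2) := by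
      ring
    linarith [m3, hfin2, m4]
  -- conclude via infDist
  intro k hk
  have hGL : ((f (x k) : EReal) + g (x k)).toReal = f (x k) + (g (x k)).toReal := by
    rw [EReal.toReal_add (EReal.coe_ne_top _) (EReal.coe_ne_bot _) (hfin k hk) (hgbot (x k)),
      EReal.toReal_coe]
  rw [hGL]
  set D := Metric.infDist (x 0) Sstar with hD
  have hD0 : 0 ≤ D := Metric.infDist_nonneg
  have hC : 0 < 2 * L / (τ * ((k : ℝ) + 1) ^ 2) := by positivity
  set C := 2 * L / (τ * ((k : ℝ) + 1) ^ 2) with hCdef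
  set δk := f (x k) + (g (x k)).toReal - Fstar with hδkdef
  have hδknn : 0 ≤ δk := hδ0 k hk
  have hsqrt : Real.sqrt (δk / C) ≤ D := by
    rw [hD]
    by_contra hlt
    push_neg at hlt
    obtain ⟨xs, hxs, hdlt⟩ := (Metric.infDist_lt_iff hSne).1 hlt
    have hb := hmain xs hxs k hk
    have hdist : dist (x 0) xs = ‖x 0 - xs‖ := dist_eq_norm _ _
    have h1 : δk / C ≤ ‖x 0 - xs‖ ^ 2 := by
      rw [div_le_iff₀ hC]
      calc δk ≤ C * ‖x 0 - xs‖ ^ 2 := hb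
        _ = ‖x 0 - xs‖ ^ 2 * C := by ring
    have h2 : Real.sqrt (δk / C) ≤ dist (x 0) xs := by
      calc Real.sqrt (δk / C) ≤ Real.sqrt (‖x 0 - xs‖ ^ 2) := Real.sqrt_le_sqrt h1
        _ = ‖x 0 - xs‖ := Real.sqrt_sq (norm_nonneg _)
        _ = dist (x 0) xs := hdist.symm
    linarith
  have h2 : δk / C ≤ D ^ 2 := by
    have := pow_le_pow_left₀ (Real.sqrt_nonneg _) hsqrt 2
    rwa [Real.sq_sqrt (by positivity)] at this
  rw [div_le_iff₀ hC] at h2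
  calc δk ≤ D ^ 2 * C := h2
    _ = C * D ^ 2 := by ring
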